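/- Let D ≥ 2 and n ≥ 2, and let m be the unique natural number with D^m ≤ n < D^{m+1}. Let k = D^m − ⌈(n − D^m)/(D − 1)⌉, where the ceiling is taken over the rationals. Let P be a PMF on n symbols with L_D(P) = L_D(U_n). Then there exists a D-ary prefix code c on n symbols whose expected length under P equals L_D(P) and in which exactly k codewords have length m and the remaining n − k codewords have length m + 1. -/

import Mathlib

/-- `P` is a probability mass function on `n` symbols: all entries positive, summing to 1. -/
def IsPMF {n : ℕ} (P : Fin n → ℝ) : Prop :=
  (∀ i, 0 < P i) ∧ ∑ i, P i = 1

/-- `c` is a `D`-ary prefix code on `n` symbols: injective, and no codeword is a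
prefix of another. -/
def IsPrefixCode {D n : ℕ} (c : Fin n → List (Fin D)) : Prop :=
  Function.Injective c ∧ ∀ i j : Fin n, i ≠ j → ¬ (c i <+: c j)

/-- Expected length of the code `c` under the PMF `P`. -/
noncomputable def expLen {D n : ℕ} (P : Fin n → ℝ) (c : Fin n → List (Fin D)) : ℝ :=
  ∑ i, P i * ((c i).length : ℝ)

/-- Minimum expected length: infimum of expected lengths over all `D`-ary prefix codes. -/
noncomputable def minExpLen (D : ℕ) {n : ℕ} (P : Fin n → ℝ) : ℝ :=
  sInf {x : ℝ | ∃ c : Fin n → List (Fin D), IsPrefixCode c ∧ x = expLen P c}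

/-- The uniform distribution on `n` symbols. -/
noncomputable def unif (n : ℕ) : Fin n → ℝ := fun _ => 1 / n

section Aux
lemma kraft_nat {D n : ℕ} (c : Fin n → List (Fin D)) (hc : IsPrefixCode c)
    (L : ℕ) (hL : ∀ i, (c i).length ≤ L) :
    ∑ i, D ^ (L - (c i).length) ≤ D ^ L := by
  classical
  let V := List.Vector (Fin D) L
  let S : Fin n → Finset V := fun i => Finset.univ.filter (fun v => c i <+: v.toList)
  have hcard : ∀ i, (S i).card = D ^ (L - (c i).length) := by
    intro i
    have hbij : (Finset.univ : Finset (List.Vector (Fin D) (L - (c i).length))).card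
        = (S i).card := by
      apply Finset.card_bij (fun a _ => (show V from ⟨c i ++ a.toList, by
        have := hL i; simp [List.length_append, a.2]; omega⟩))
      · intro a _
        exact Finset.mem_filter.mpr ⟨Finset.mem_univ _, List.prefix_append _ _⟩
      · intro a _ b _ hab
        have := congrArg (fun v : V => v.1) hab
        simp only at this
        have : a.toList = b.toList := List.append_cancel_left this
        exact Subtype.ext this
      · intro v hv
        simp only [S, Finset.mem_filter] at hv
        obtain ⟨t, ht⟩ := hv.2
        have htlen : t.length = L - (c i).length := by
          have := congrArg List.length ht
          simp [List.length_append] at this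
          have hvl : v.1.length = L := v.2
          omega
        exact ⟨⟨t, htlen⟩, Finset.mem_univ _, Subtype.ext ht⟩
    have hcardV : (Finset.univ : Finset (List.Vector (Fin D) (L - (c i).length))).card
        = D ^ (L - (c i).length) := by
      rw [Finset.card_univ, card_vector, Fintype.card_fin]
    omega
  have hdisj : ∀ i ∈ (Finset.univ : Finset (Fin n)), ∀ j ∈ Finset.univ, i ≠ j →
      Disjoint (S i) (S j) := by
    intro i _ j _ hij
    rw [Finset.disjoint_left]
    intro v hvi hvj
    simp only [S, Finset.mem_filter] at hvi hvj
    rcases List.prefix_or_prefix_of_prefix hvi.2 hvj.2 with h | h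
    · exact hc.2 i j hij h
    · exact hc.2 j i (Ne.symm hij) h
  calc ∑ i, D ^ (L - (c i).length) = ∑ i, (S i).card := by
        exact Finset.sum_congr rfl fun i _ => (hcard i).symm
    _ = (Finset.univ.biUnion S).card := (Finset.card_biUnion hdisj).symm
    _ ≤ Fintype.card V := Finset.card_le_univ _
    _ = D ^ L := by show Fintype.card (List.Vector (Fin D) L) = D ^ L; rw [card_vector, Fintype.card_fin]

lemma per_term {D : ℤ} (hD : 2 ≤ D) (m L l : ℕ) (hl : l ≤ L) :
    D ^ L ≤ (D - 1) * ((l : ℤ) - (m + 1)) * D ^ L + D ^ (m + 1 + (L - l)) := by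
  have hDL : (0:ℤ) < D ^ L := pow_pos (by linarith) L
  rcases le_or_gt l (m+1) with h | h
  · have ht : m + 1 + (L - l) = (m + 1 - l) + L := by omega
    rw [ht, pow_add]
    have hber : 1 + ((m + 1 - l : ℕ):ℤ) * (D - 1) ≤ D ^ (m + 1 - l) := by
      have := one_add_mul_le_pow (a := D - 1) (by linarith) (m + 1 - l)
      have h1 : (1:ℤ) + (D - 1) = D := by ring
      calc (1:ℤ) + ((m + 1 - l : ℕ):ℤ) * (D - 1) ≤ (1 + (D-1)) ^ (m + 1 - l) := this
        _ = D ^ (m + 1 - l) := by rw [h1]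
    have htl : (l : ℤ) - (m+1) = -((m + 1 - l : ℕ):ℤ) := by
      have : ((m + 1 - l : ℕ):ℤ) = (m:ℤ) + 1 - l := by omega
      omega
    rw [htl]
    nlinarith [hber, hDL]
  · have h1 : (1:ℤ) ≤ (D - 1) * ((l:ℤ) - (m+1)) := by
      have : (1:ℤ) ≤ (l:ℤ) - (m+1) := by omega
      nlinarith
    have h2 : (0:ℤ) < D ^ (m+1+(L-l)) := pow_pos (by linarith) _
    nlinarith

lemma sum_len_ge {D n m k : ℕ} (hD : 2 ≤ D)
    (hk2 : ((D:ℤ)) ^ (m+1) - n < (k+1) * ((D:ℤ) - 1))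
    (c : Fin n → List (Fin D)) (hc : IsPrefixCode c) :
    n * (m + 1) ≤ (∑ i, (c i).length) + k := by
  classical
  set L := Finset.univ.sup (fun i => (c i).length) with hLdef
  have hL : ∀ i, (c i).length ≤ L := fun i =>
    Finset.le_sup (f := fun i => (c i).length) (Finset.mem_univ i)
  have hkraft := kraft_nat c hc L hL
  have hkraftZ : (∑ i, (D:ℤ) ^ (L - (c i).length)) ≤ (D:ℤ) ^ L := by
    exact_mod_cast hkraft
  have hDz : (2:ℤ) ≤ (D:ℤ) := by exact_mod_cast hD
  have hDL : (0:ℤ) < (D:ℤ) ^ L := pow_pos (by linarith) L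
  have hsum : (n:ℤ) * (D:ℤ) ^ L ≤
      ((D:ℤ) - 1) * ((∑ i, ((c i).length : ℤ)) - n * (m+1)) * (D:ℤ) ^ L
        + (D:ℤ) ^ (m+1) * ∑ i, (D:ℤ) ^ (L - (c i).length) := by
    have hterm : ∀ i : Fin n, (D:ℤ) ^ L ≤
        ((D:ℤ) - 1) * (((c i).length : ℤ) - (m + 1)) * (D:ℤ) ^ L
          + (D:ℤ) ^ (m+1) * (D:ℤ) ^ (L - (c i).length) := by
      intro i
      have := per_term hDz m L ((c i).length) (hL i)
      rwa [pow_add] at this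
    calc (n:ℤ) * (D:ℤ) ^ L = ∑ _i : Fin n, (D:ℤ) ^ L := by
          rw [Finset.sum_const, Finset.card_univ, Fintype.card_fin]; ring
      _ ≤ ∑ i, (((D:ℤ) - 1) * (((c i).length : ℤ) - (m + 1)) * (D:ℤ) ^ L
          + (D:ℤ) ^ (m+1) * (D:ℤ) ^ (L - (c i).length)) :=
          Finset.sum_le_sum fun i _ => hterm i
      _ = (∑ i, ((D:ℤ) - 1) * (((c i).length : ℤ) - (m + 1))) * (D:ℤ) ^ L
          + (D:ℤ) ^ (m+1) * ∑ i, (D:ℤ) ^ (L - (c i).length) := by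
          rw [Finset.sum_add_distrib, Finset.sum_mul, Finset.mul_sum]
      _ = ((D:ℤ) - 1) * ((∑ i, ((c i).length : ℤ)) - n * (m+1)) * (D:ℤ) ^ L
          + (D:ℤ) ^ (m+1) * ∑ i, (D:ℤ) ^ (L - (c i).length) := by
          congr 2
          rw [← Finset.mul_sum, Finset.sum_sub_distrib, Finset.sum_const, Finset.card_univ,
            Fintype.card_fin]
          push_cast
          ring
  -- now conclude
  have hmain : (n:ℤ) ≤ ((D:ℤ) - 1) * ((∑ i, ((c i).length : ℤ)) - n * (m+1)) + (D:ℤ) ^ (m+1) := by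
    have h2 : (n:ℤ) * (D:ℤ) ^ L ≤
        (((D:ℤ) - 1) * ((∑ i, ((c i).length : ℤ)) - n * (m+1)) + (D:ℤ) ^ (m+1)) * (D:ℤ) ^ L := by
      calc (n:ℤ) * (D:ℤ) ^ L ≤ _ := hsum
        _ ≤ _ := by
          have := mul_le_mul_of_nonneg_left hkraftZ (a := (D:ℤ) ^ (m+1))
            (pow_nonneg (by linarith) _)
          nlinarith [this]
    exact le_of_mul_le_mul_right h2 hDL
  by_contra hcon
  push_neg at hcon
  have hSk : (∑ i, ((c i).length : ℤ)) + k + 1 ≤ (n:ℤ) * (m+1) := by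
    have : (∑ i, (c i).length) + k + 1 ≤ n * (m + 1) := hcon
    have hcast : ((∑ i, (c i).length : ℕ) : ℤ) = ∑ i, ((c i).length : ℤ) := by push_cast; rfl
    calc (∑ i, ((c i).length : ℤ)) + k + 1 = ((∑ i, (c i).length : ℕ) : ℤ) + k + 1 := by
          rw [hcast]
      _ ≤ (n:ℤ) * (m+1) := by exact_mod_cast this
  nlinarith [hmain, hSk, hk2, hDz]

lemma k_facts {D n m k : ℕ} (hD : 2 ≤ D) (hm : D ^ m ≤ n) (hm' : n < D ^ (m + 1))
    (hk : k = D ^ m - (⌈((n - D ^ m : ℕ) : ℚ) / ((D : ℚ) - 1)⌉).toNat) :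
    k ≤ D ^ m ∧ (k:ℤ) * ((D:ℤ) - 1) + n ≤ (D:ℤ) ^ (m+1) ∧
      ((D:ℤ)) ^ (m+1) - n < ((k:ℤ)+1) * ((D:ℤ) - 1) := by
  have hD1 : (0:ℚ) < (D:ℚ) - 1 := by
    have : (2:ℚ) ≤ (D:ℚ) := by exact_mod_cast hD
    linarith
  have hcast : ((n - D ^ m : ℕ) : ℚ) = (n : ℚ) - (D:ℚ)^m := by
    push_cast [hm]
    ring
  set x : ℚ := ((n - D ^ m : ℕ) : ℚ) / ((D : ℚ) - 1) with hx
  have hx0 : 0 ≤ x := by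
    apply div_nonneg _ hD1.le
    positivity
  set e : ℤ := ⌈x⌉ with he
  have he0 : 0 ≤ e := Int.ceil_nonneg hx0
  have hle : x ≤ (e:ℚ) := Int.le_ceil x
  have hlt : (e:ℚ) < x + 1 := Int.ceil_lt_add_one x
  have hxval : x * ((D:ℚ) - 1) = (n : ℚ) - (D:ℚ)^m := by
    rw [hx, hcast, div_mul_cancel₀ _ (ne_of_gt hD1)]
  have hpowQ : ((D:ℚ))^(m+1) = (D:ℚ)^m * D := pow_succ _ _
  have hmQ : ((D:ℚ))^m ≤ (n:ℚ) := by exact_mod_cast hm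
  have hmQ' : (n:ℚ) < ((D:ℚ))^(m+1) := by exact_mod_cast hm'
  have heubZ : e ≤ ((D^m : ℕ) : ℤ) := by
    rw [he, Int.ceil_le]
    push_cast
    rw [hx, hcast, div_le_iff₀ hD1]
    nlinarith
  have heub : (e:ℚ) ≤ (D:ℚ)^m := by exact_mod_cast heubZ
  have hkz : (k:ℤ) = ((D^m : ℕ) : ℤ) - e := by
    have h1 : e.toNat ≤ D ^ m := by omega
    rw [hk]
    push_cast [h1]
    omega
  have hlow : (n:ℚ) - (D:ℚ)^m ≤ (e:ℚ) * ((D:ℚ) - 1) := by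
    calc (n:ℚ) - (D:ℚ)^m = x * ((D:ℚ)-1) := hxval.symm
      _ ≤ (e:ℚ) * ((D:ℚ)-1) := by nlinarith
  have hhigh : ((e:ℚ) - 1) * ((D:ℚ) - 1) < (n:ℚ) - (D:ℚ)^m := by
    calc ((e:ℚ) - 1) * ((D:ℚ)-1) < x * ((D:ℚ)-1) := by nlinarith
      _ = (n:ℚ) - (D:ℚ)^m := hxval
  refine ⟨by omega, ?_, ?_⟩
  · have : ((k:ℚ)) * ((D:ℚ) - 1) + n ≤ ((D:ℚ)) ^ (m+1) := by
      have hkq : (k:ℚ) = (D:ℚ)^m - e := by exact_mod_cast hkz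
      rw [hkq, hpowQ]
      nlinarith
    exact_mod_cast this
  · have : ((D:ℚ)) ^ (m+1) - n < ((k:ℚ)+1) * ((D:ℚ) - 1) := by
      have hkq : (k:ℚ) = (D:ℚ)^m - e := by exact_mod_cast hkz
      rw [hkq, hpowQ]
      nlinarith
    exact_mod_cast this

lemma exists_code {D n m k : ℕ} (hD : 2 ≤ D) (hkm : k ≤ D ^ m)
    (hcap : n + k * D ≤ D ^ (m+1) + k) (A : Finset (Fin n)) (hA : A.card = k) :
    ∃ c : Fin n → List (Fin D), IsPrefixCode c ∧
      (∀ i ∈ A, (c i).length = m) ∧ (∀ i ∉ A, (c i).length = m + 1) := by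
  classical
  have hD0 : 0 < D := by omega
  have hAc : Aᶜ.card = n - k := by
    rw [Finset.card_compl, hA, Fintype.card_fin]
  let fA : {x // x ∈ A} ≃ Fin k := A.equivFinOfCardEq hA
  let fB : {x // x ∈ Aᶜ} ≃ Fin (n - k) := Aᶜ.equivFinOfCardEq hAc
  let w : Fin (D ^ m) → List (Fin D) := fun x => List.ofFn (finFunctionFinEquiv.symm x)
  have hwlen : ∀ x, (w x).length = m := fun x => List.length_ofFn
  have hwinj : Function.Injective w := fun x y h =>
    finFunctionFinEquiv.symm.injective (List.ofFn_injective h)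
  have hpidx : ∀ r : Fin (n - k), k + (r : ℕ) / D < D ^ m := by
    intro r
    have hr := r.2
    have hkD : k ≤ k * D := Nat.le_mul_of_pos_right k hD0
    have hmul : (D ^ m - k) * D = D ^ (m+1) - k * D := by
      rw [Nat.sub_mul, ← pow_succ]
    have h1 : (r : ℕ) < (D ^ m - k) * D := by
      rw [hmul]; omega
    have := (Nat.div_lt_iff_lt_mul hD0).mpr h1
    omega
  let pIdx : Fin (n - k) → Fin (D ^ m) := fun r => ⟨k + (r : ℕ) / D, hpidx r⟩
  let dig : Fin (n - k) → Fin D := fun r => ⟨(r : ℕ) % D, Nat.mod_lt _ hD0⟩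
  let c : Fin n → List (Fin D) := fun i =>
    if h : i ∈ A then w ((fA ⟨i, h⟩).castLE hkm)
    else w (pIdx (fB ⟨i, Finset.mem_compl.mpr h⟩)) ++ [dig (fB ⟨i, Finset.mem_compl.mpr h⟩)]
  have hlenA : ∀ i ∈ A, (c i).length = m := by
    intro i hi; simp only [c, dif_pos hi, hwlen]
  have hlenB : ∀ i ∉ A, (c i).length = m + 1 := by
    intro i hi; simp only [c, dif_neg hi, List.length_append, hwlen, List.length_singleton]
  -- key recovery
  have hrec : ∀ r r' : Fin (n - k), pIdx r = pIdx r' → dig r = dig r' → r = r' := by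
    intro r r' h1 h2
    have e1 := congrArg Fin.val h1
    have e2 := congrArg Fin.val h2
    simp only [pIdx] at e1
    simp only [dig] at e2
    have : (r : ℕ) = (r' : ℕ) := by
      have hu : (r : ℕ) / D = (r' : ℕ) / D := Nat.add_left_cancel e1
      have h3 := Nat.div_add_mod (r : ℕ) D
      have h4 := Nat.div_add_mod (r' : ℕ) D
      rw [hu, e2] at h3
      exact h3.symm.trans h4
    exact Fin.ext this
  have hpf : ∀ i j : Fin n, i ≠ j → ¬ (c i <+: c j) := by
    intro i j hij hpre
    by_cases hi : i ∈ A <;> by_cases hj : j ∈ A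
    · have := hpre.eq_of_length (by rw [hlenA i hi, hlenA j hj])
      simp only [c, dif_pos hi, dif_pos hj] at this
      have := hwinj this
      have := Fin.castLE_injective hkm this
      exact hij (Subtype.ext_iff.mp (fA.injective this))
    · -- i ∈ A, j ∉ A : c i has length m, prefix of w p ++ [d]
      simp only [c, dif_pos hi, dif_neg hj] at hpre
      set p := pIdx (fB ⟨j, Finset.mem_compl.mpr hj⟩) with hp
      have hcomp := List.prefix_or_prefix_of_prefix hpre (List.prefix_append (w p) _)
      have heq : w ((fA ⟨i, hi⟩).castLE hkm) = w p := by
        rcases hcomp with h | h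
        · exact h.eq_of_length (by rw [hwlen, hwlen])
        · exact (h.eq_of_length (by rw [hwlen, hwlen])).symm
      have := congrArg Fin.val (hwinj heq)
      simp only [Fin.coe_castLE, hp, pIdx] at this
      have hlt : ((fA ⟨i, hi⟩) : ℕ) < k := (fA ⟨i, hi⟩).2
      have hge : k ≤ ((fA ⟨i, hi⟩) : ℕ) := this.symm ▸ Nat.le_add_right k _
      exact absurd hlt (Nat.not_lt.mpr hge)
    · -- i ∉ A, j ∈ A : length m+1 prefix of length m, impossible
      have := hpre.length_le
      rw [hlenB i hi, hlenA j hj] at this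
      omega
    · have heq := hpre.eq_of_length (by rw [hlenB i hi, hlenB j hj])
      simp only [c, dif_neg hi, dif_neg hj] at heq
      have hinj := List.append_inj heq (by rw [hwlen, hwlen])
      have h1 := hwinj hinj.1
      have h2 : dig (fB ⟨i, Finset.mem_compl.mpr hi⟩) = dig (fB ⟨j, Finset.mem_compl.mpr hj⟩) := by
        have := hinj.2
        simpa using this
      have := hrec _ _ h1 h2
      exact hij (Subtype.ext_iff.mp (fB.injective this))
  refine ⟨c, ⟨?_, hpf⟩, hlenA, hlenB⟩
  intro i j h
  by_contra hne
  exact hpf i j hne (h ▸ List.prefix_refl _)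

lemma topk {n k : ℕ} (hk : k ≤ n) (hn : 0 < n) (P : Fin n → ℝ) (hP : IsPMF P) :
    ∃ A : Finset (Fin n), A.card = k ∧ (k : ℝ) / n ≤ ∑ i ∈ A, P i := by
  classical
  have hne : ((Finset.univ : Finset (Fin n)).powersetCard k).Nonempty :=
    Finset.powersetCard_nonempty.mpr (by simpa using hk)
  obtain ⟨A, hAmem, hAmax⟩ :=
    Finset.exists_max_image _ (fun B => ∑ i ∈ B, P i) hne
  have hAcard : A.card = k := (Finset.mem_powersetCard.mp hAmem).2
  refine ⟨A, hAcard, ?_⟩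
  rcases Nat.eq_zero_or_pos k with hk0 | hk0
  · subst hk0
    simp only [Nat.cast_zero, zero_div]
    exact Finset.sum_nonneg fun i _ => (hP.1 i).le
  · have hAne : A.Nonempty := Finset.card_pos.mp (by omega)
    obtain ⟨i0, hi0A, hi0min⟩ := Finset.exists_min_image A P hAne
    have hswap : ∀ j ∉ A, P j ≤ P i0 := by
      intro j hj
      have hjne : j ∉ A.erase i0 := fun h => hj (Finset.mem_of_mem_erase h)
      have hBcard : (insert j (A.erase i0)).card = k := by
        rw [Finset.card_insert_of_notMem hjne, Finset.card_erase_of_mem hi0A, hAcard]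
        omega
      have hBmem : insert j (A.erase i0) ∈ (Finset.univ : Finset (Fin n)).powersetCard k :=
        Finset.mem_powersetCard.mpr ⟨Finset.subset_univ _, hBcard⟩
      have hle := hAmax _ hBmem
      rw [Finset.sum_insert hjne, Finset.sum_erase_eq_sub hi0A] at hle
      linarith
    have h1 : ∑ i ∈ Aᶜ, P i ≤ (↑(n - k) : ℝ) * P i0 := by
      have : ∑ i ∈ Aᶜ, P i ≤ ∑ _i ∈ Aᶜ, P i0 :=
        Finset.sum_le_sum fun i hi => hswap i (Finset.mem_compl.mp hi)
      rw [Finset.sum_const, Finset.card_compl, hAcard, Fintype.card_fin] at this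
      simpa [nsmul_eq_mul] using this
    have h2 : (k : ℝ) * P i0 ≤ ∑ i ∈ A, P i := by
      have : ∑ _i ∈ A, P i0 ≤ ∑ i ∈ A, P i :=
        Finset.sum_le_sum fun i hi => hi0min i hi
      rw [Finset.sum_const, hAcard] at this
      simpa [nsmul_eq_mul] using this
    have hsum1 : ∑ i ∈ A, P i + ∑ i ∈ Aᶜ, P i = 1 := by
      rw [Finset.sum_add_sum_compl]; exact hP.2
    have hnk : ((n - k : ℕ) : ℝ) = (n : ℝ) - k := by
      push_cast [hk]; ring
    have hkR : (0:ℝ) < k := by exact_mod_cast hk0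
    have hnR : (0:ℝ) < n := by exact_mod_cast hn
    have hknR : (k:ℝ) ≤ n := by exact_mod_cast hk
    rw [div_le_iff₀ hnR]
    rw [hnk] at h1
    nlinarith [mul_le_mul_of_nonneg_left h1 hkR.le,
      mul_le_mul_of_nonneg_left h2 (by linarith : (0:ℝ) ≤ (n:ℝ) - k), hsum1]

end Aux

/-- If L_D(P) = L_D(U_n), then P has an optimal prefix code with
exactly k codewords of length m and n − k codewords of length m + 1. -/
theorem stmt_11 (D n m : ℕ) (hD : 2 ≤ D) (hn : 2 ≤ n)
    (hm : D ^ m ≤ n) (hm' : n < D ^ (m + 1))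
    (k : ℕ) (hk : k = D ^ m - (⌈((n - D ^ m : ℕ) : ℚ) / ((D : ℚ) - 1)⌉).toNat)
    (P : Fin n → ℝ) (hP : IsPMF P)
    (hmax : minExpLen D P = minExpLen D (unif n)) :
    ∃ c : Fin n → List (Fin D), IsPrefixCode c ∧
      expLen P c = minExpLen D P ∧
      (Finset.univ.filter (fun i : Fin n => (c i).length = m)).card = k ∧
      (Finset.univ.filter (fun i : Fin n => (c i).length = m + 1)).card = n - k := by
  classical
  have hn0 : 0 < n := by omega
  obtain ⟨hkm, hfact2, hfact3⟩ := k_facts hD hm hm' hk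
  have hkn : k ≤ n := le_trans hkm hm
  have hcap : n + k * D ≤ D ^ (m + 1) + k := by
    have : ((n + k * D : ℕ) : ℤ) ≤ ((D ^ (m+1) + k : ℕ) : ℤ) := by
      push_cast
      linarith [hfact2]
    exact_mod_cast this
  obtain ⟨A, hA, hAsum⟩ := topk hkn hn0 P hP
  obtain ⟨c, hcpc, hlenA, hlenB⟩ := exists_code hD hkm hcap A hA
  have hnR : (0:ℝ) < n := by exact_mod_cast hn0
  -- filter identities
  have hfil1 : (Finset.univ.filter (fun i : Fin n => (c i).length = m)) = A := by
    ext i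
    simp only [Finset.mem_filter, Finset.mem_univ, true_and]
    constructor
    · intro h
      by_contra hi
      have := hlenB i hi
      omega
    · exact hlenA i
  have hfil2 : (Finset.univ.filter (fun i : Fin n => (c i).length = m + 1)) = Aᶜ := by
    ext i
    simp only [Finset.mem_filter, Finset.mem_univ, true_and, Finset.mem_compl]
    constructor
    · intro h hi
      have := hlenA i hi
      omega
    · exact hlenB i
  -- expected length values
  set SA := ∑ i ∈ A, P i with hSA
  have hSAc : ∑ i ∈ Aᶜ, P i = 1 - SA := by
    have := Finset.sum_add_sum_compl A P
    rw [hP.2] at this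
    linarith
  have hsplit : ∀ Q : Fin n → ℝ, expLen Q c
      = (∑ i ∈ A, Q i) * m + (∑ i ∈ Aᶜ, Q i) * ((m:ℝ) + 1) := by
    intro Q
    rw [expLen, ← Finset.sum_add_sum_compl A (fun i => Q i * ((c i).length : ℝ))]
    congr 1
    · rw [Finset.sum_mul]
      exact Finset.sum_congr rfl fun i hi => by rw [hlenA i hi]
    · rw [Finset.sum_mul]
      refine Finset.sum_congr rfl fun i hi => ?_
      rw [hlenB i (Finset.mem_compl.mp hi)]
      push_cast
      ring
  have hexpP : expLen P c = ((m:ℝ) + 1) - SA := by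
    rw [hsplit P, hSAc, ← hSA]
    ring
  have hUA : ∑ i ∈ A, unif n i = (k:ℝ) / n := by
    simp only [unif]
    rw [Finset.sum_const, hA, nsmul_eq_mul]
    ring
  have hUAc : ∑ i ∈ Aᶜ, unif n i = ((n:ℝ) - k) / n := by
    simp only [unif]
    rw [Finset.sum_const, Finset.card_compl, hA, Fintype.card_fin, nsmul_eq_mul]
    have : ((n - k : ℕ) : ℝ) = (n:ℝ) - k := by push_cast [hkn]; ring
    rw [this]
    ring
  have hexpU : expLen (unif n) c = ((m:ℝ) + 1) - (k:ℝ)/n := by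
    rw [hsplit (unif n), hUA, hUAc]
    field_simp
    ring
  -- lower bound for every prefix code under the uniform distribution
  have hlb : ∀ x ∈ {x : ℝ | ∃ c' : Fin n → List (Fin D), IsPrefixCode c' ∧ x = expLen (unif n) c'},
      ((m:ℝ) + 1) - (k:ℝ)/n ≤ x := by
    rintro x ⟨c', hc', rfl⟩
    have hS := sum_len_ge hD hfact3 c' hc'
    have hScast : (n:ℝ) * ((m:ℝ) + 1) ≤ (∑ i, ((c' i).length : ℝ)) + k := by
      have : ((n * (m+1) : ℕ) : ℝ) ≤ (((∑ i, (c' i).length) + k : ℕ) : ℝ) := by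
        exact_mod_cast hS
      push_cast at this
      linarith
    have hval : expLen (unif n) c' = (∑ i, ((c' i).length : ℝ)) / n := by
      rw [expLen, Finset.sum_div]
      exact Finset.sum_congr rfl fun i _ => by rw [unif]; ring
    rw [hval, le_div_iff₀ hnR, sub_mul, div_mul_cancel₀ _ (ne_of_gt hnR)]
    linarith
  have hmemU : expLen (unif n) c ∈
      {x : ℝ | ∃ c' : Fin n → List (Fin D), IsPrefixCode c' ∧ x = expLen (unif n) c'} :=
    ⟨c, hcpc, rfl⟩
  have hminU : minExpLen D (unif n) = ((m:ℝ) + 1) - (k:ℝ)/n := by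
    refine le_antisymm ?_ (le_csInf ⟨_, hmemU⟩ hlb)
    have := csInf_le ⟨((m:ℝ) + 1) - (k:ℝ)/n, hlb⟩ hmemU
    rwa [hexpU] at this
  have hbddP : BddBelow {x : ℝ | ∃ c' : Fin n → List (Fin D), IsPrefixCode c' ∧ x = expLen P c'} := by
    refine ⟨0, ?_⟩
    rintro x ⟨c', hc', rfl⟩
    exact Finset.sum_nonneg fun i _ => mul_nonneg (hP.1 i).le (by positivity)
  have h1 : minExpLen D P ≤ expLen P c := csInf_le hbddP ⟨c, hcpc, rfl⟩
  have h2 : expLen P c ≤ ((m:ℝ) + 1) - (k:ℝ)/n := by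
    rw [hexpP]
    linarith [hAsum]
  have heq : expLen P c = minExpLen D P := by
    have : minExpLen D P = ((m:ℝ) + 1) - (k:ℝ)/n := by rw [hmax, hminU]
    linarith
  refine ⟨c, hcpc, heq, ?_, ?_⟩
  · rw [hfil1, hA]
  · rw [hfil2, Finset.card_compl, hA, Fintype.card_fin]
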